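/- Let Δ be an oriented n-dimensional pseudomanifold on d vertices that contains a subcomplex Δ' which is a bipyramid with apexes the vertices 1 and 2 over an (n−1)-dimensional complex Δ'' with facets σ_1,…,σ_k; that is, σ_i ∪ {1} and σ_i ∪ {2} are facets of Δ for all i. Set y_i = y_{σ_i∪{2}} and y'_i = y_{σ_i∪{1}}. Then J_Δ contains all 2×2 minors of the 2×(k+1) matrix with rows (x_1, y_1, …, y_k) and (x_2, y'_1, …, y'_k); that is, x_1 y'_i − x_2 y_i ∈ J_Δ and y_i y'_j − y_j y'_i ∈ J_Δ for all i, j. -/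

import Mathlib

open Finset

/-- The Koszul/simplicial sign of the vertex `i` inside the subset `s`: `(−1)^p` where
`p` is the number of elements of `s` strictly smaller than `i`. -/
def simpSgn {d : ℕ} (s : Finset (Fin d)) (i : Fin d) : ℤ := (-1) ^ (s.filter (· < i)).card

/-- An oriented pseudomanifold of dimension `n` on the `d` vertices `{0,…,d−1}`:
a collection of facets, each an `(n+1)`-element subset of the vertices, equipped with
orientations (recorded, relative to the standard orientation coming from the ordering
of the vertices, by a sign `sgn σ = ±1`), such that every `n`-element subset of the
vertices lies in exactly zero or two facets, in the latter case the induced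
orientations cancelling, and whose dual graph (a vertex for each facet, an edge when
two facets share an `n`-element subset) is connected. -/
structure OrientedPseudomanifold (n d : ℕ) where
  facets : Finset (Finset (Fin d))
  card_eq : ∀ σ ∈ facets, σ.card = n + 1
  sgn : Finset (Fin d) → ℤ
  sgn_pm : ∀ σ ∈ facets, sgn σ = 1 ∨ sgn σ = -1
  ridge : ∀ t : Finset (Fin d), t.card = n →
    (facets.filter (fun σ => t ⊆ σ)).card = 0 ∨ (facets.filter (fun σ => t ⊆ σ)).card = 2
  cancel : ∀ t : Finset (Fin d), t.card = n →
    ∑ σ ∈ facets.filter (fun σ => t ⊆ σ), sgn σ * ∑ i ∈ σ \ t, simpSgn σ i = 0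
  connected : (SimpleGraph.fromRel (fun (σ τ : {x // x ∈ facets}) =>
    ((σ : Finset (Fin d)) ∩ (τ : Finset (Fin d))).card = n)).Connected



open MvPolynomial

noncomputable section

variable {n d : ℕ} (k : Type*) [Field k] (Δ : OrientedPseudomanifold n d)

/-- The variables of the ring `S = k[x₁,…,x_d, y_σ (σ ∈ Δ_n)]`. -/
abbrev PMVars (Δ : OrientedPseudomanifold n d) : Type := Fin d ⊕ {x // x ∈ Δ.facets}

/-- The multidegree (weight) of a variable: `deg x_i = e_i`,
`deg y_σ = wt(σ) = e_0 − Σ_{j∈σ} e_j`, in `ℤ^{d+1}` (coordinate `0` is `e_0`, and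
coordinate `i.succ` is `e_i`). -/
def wtv : PMVars Δ → (Fin (d + 1) →₀ ℤ) :=
  Sum.elim (fun i => Finsupp.single i.succ 1)
    (fun σ => Finsupp.single 0 1 - ∑ j ∈ (σ : Finset (Fin d)), Finsupp.single j.succ 1)

/-- `e₀ ∈ ℤ^{d+1}`. -/
def e0 (d : ℕ) : Fin (d + 1) →₀ ℤ := Finsupp.single 0 1

/-- The toric ideal `I_𝒜 ⊆ S` of the point configuration
`𝒜 = {e_1,…,e_d} ∪ {wt(σ) : σ ∈ Δ_n}`: the kernel of the `k`-algebra map to the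
Laurent polynomial ring sending each variable to the monomial with exponent its
weight. -/
def toricIdealPM : Ideal (MvPolynomial (PMVars Δ) k) :=
  RingHom.ker (MvPolynomial.aeval (fun v =>
    (AddMonoidAlgebra.single (wtv Δ v) 1 : AddMonoidAlgebra k (Fin (d + 1) →₀ ℤ)))).toRingHom

/-- The binomial ideal `J(Δ)`, generated by the binomials `x_i y_σ − x_j y_τ` over all
pairs of facets `σ, τ` and vertices `i ∈ σ`, `j ∈ τ` with `σ∖{i} = τ∖{j}`. -/
def JofPM : Ideal (MvPolynomial (PMVars Δ) k) :=
  Ideal.span {p | ∃ (σ τ : {x // x ∈ Δ.facets}) (i j : Fin d),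
    i ∈ (σ : Finset (Fin d)) ∧ j ∈ (τ : Finset (Fin d)) ∧
    (σ : Finset (Fin d)).erase i = (τ : Finset (Fin d)).erase j ∧
    p = X (Sum.inl i) * X (Sum.inr σ) - X (Sum.inl j) * X (Sum.inr τ)}

/-- The product of the `x`-variables. -/
def xProd : MvPolynomial (PMVars Δ) k := ∏ i : Fin d, X (Sum.inl i)

/-- `J_Δ = J(Δ) : (x₁⋯x_d)^∞`, the saturation of `J(Δ)` at the product of the
`x`-variables. -/
def JsatPM : Ideal (MvPolynomial (PMVars Δ) k) :=
  ⨆ m : ℕ, Submodule.colon (JofPM k Δ) (Ideal.span {xProd k Δ ^ m})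

/-- The defining ideal `L_Δ` of the Rees algebra of the Stanley–Reisner ideal of the
Alexander dual of `Δ`: the kernel of the map `S → k[x₁,…,x_d,t]`, `x_i ↦ x_i`,
`y_σ ↦ t·∏_{i∉σ} x_i` (the extra variable `t` is `X none`). -/
def LofPM : Ideal (MvPolynomial (PMVars Δ) k) :=
  RingHom.ker (MvPolynomial.aeval (Sum.elim
    (fun i => (X (some i) : MvPolynomial (Option (Fin d)) k))
    (fun (σ : {x // x ∈ Δ.facets}) => X none * ∏ i ∈ (σ : Finset (Fin d))ᶜ, X (some i)))).toRingHom

/-- The faces of the simplicial complex `Δ_m(𝒜)` (for `m = e₀`), per Hochster's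
formula: subsets `I` of the point configuration `𝒜` (indexed by the variables) with
`e₀ − Σ_{a ∈ I} a` in the affine semigroup `ℕ𝒜`. -/
def facesDeltaE0 : Set (Finset (PMVars Δ)) :=
  {I | (e0 d - ∑ v ∈ I, wtv Δ v) ∈ AddSubmonoid.closure (Set.range (wtv Δ))}

/-- The faces of `Δ`, regarded as the simplicial complex generated by its facets. -/
def facesPM (Δ : OrientedPseudomanifold n d) : Set (Finset (Fin d)) :=
  {t | ∃ σ ∈ Δ.facets, t ⊆ σ}

/-- The geometric realization of an abstract simplicial complex with (finite) vertex
set `V` and face set `K`, as a subspace of `V → ℝ`. -/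
def realization (V : Type*) [Fintype V] (K : Set (Finset V)) : Set (V → ℝ) :=
  {f | (∀ v, 0 ≤ f v) ∧ (∑ v, f v = 1) ∧ ∃ s ∈ K, ∀ v, f v ≠ 0 → v ∈ s}

end



/-!
STATEMENT 13: Let `Δ` be an oriented `n`-dimensional pseudomanifold on `d` vertices
containing a bipyramid with apexes two vertices `v₁, v₂` over an `(n−1)`-dimensional
complex with facets `σ₁,…,σ_m` (i.e. each `σ_i` is an `n`-element set of vertices not
containing `v₁, v₂`, and both `σ_i ∪ {v₁}` and `σ_i ∪ {v₂}` are facets of `Δ`).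
With `y_i = y_{σ_i ∪ {v₂}}` and `y'_i = y_{σ_i ∪ {v₁}}`, the ideal
`J_Δ = J(Δ) : (x₁⋯x_d)^∞` contains all 2×2 minors of the 2×(m+1) matrix with rows
`(x_{v₁}, y_1, …, y_m)` and `(x_{v₂}, y'_1, …, y'_m)`:
`x_{v₁} y'_i − x_{v₂} y_i ∈ J_Δ` and `y_i y'_j − y_j y'_i ∈ J_Δ`.
-/

theorem bipyramid_gives_minors {n d m : ℕ} (k : Type*) [Field k]
    (Δ : OrientedPseudomanifold n d) (v₁ v₂ : Fin d) (hv : v₁ ≠ v₂)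
    (σ : Fin m → Finset (Fin d))
    (hcard : ∀ i, (σ i).card = n)
    (hv₁ : ∀ i, v₁ ∉ σ i) (hv₂ : ∀ i, v₂ ∉ σ i)
    (hfac₁ : ∀ i, insert v₁ (σ i) ∈ Δ.facets)
    (hfac₂ : ∀ i, insert v₂ (σ i) ∈ Δ.facets) :
    (∀ i : Fin m,
      X (Sum.inl v₁) * X (Sum.inr ⟨insert v₁ (σ i), hfac₁ i⟩) -
        X (Sum.inl v₂) * X (Sum.inr ⟨insert v₂ (σ i), hfac₂ i⟩) ∈ JsatPM k Δ) ∧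
    (∀ i j : Fin m,
      X (Sum.inr ⟨insert v₂ (σ i), hfac₂ i⟩) * X (Sum.inr ⟨insert v₁ (σ j), hfac₁ j⟩) -
        X (Sum.inr ⟨insert v₂ (σ j), hfac₂ j⟩) * X (Sum.inr ⟨insert v₁ (σ i), hfac₁ i⟩)
          ∈ JsatPM k Δ) := by
  classical
  have hJle : ∀ p, p ∈ JofPM k Δ → p ∈ JsatPM k Δ := by
    intro p hp
    apply Submodule.mem_iSup_of_mem 0
    rw [Ideal.mem_colon_span_singleton, pow_zero, mul_one]
    exact hp
  have hgen : ∀ i : Fin m,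
      X (Sum.inl v₁) * X (Sum.inr ⟨insert v₁ (σ i), hfac₁ i⟩) -
        X (Sum.inl v₂) * X (Sum.inr ⟨insert v₂ (σ i), hfac₂ i⟩) ∈ JofPM k Δ := by
    intro i
    apply Ideal.subset_span
    refine ⟨⟨insert v₁ (σ i), hfac₁ i⟩, ⟨insert v₂ (σ i), hfac₂ i⟩, v₁, v₂,
      Finset.mem_insert_self _ _, Finset.mem_insert_self _ _, ?_, rfl⟩
    simp [Finset.erase_insert (hv₁ i), Finset.erase_insert (hv₂ i)]
  refine ⟨fun i => hJle _ (hgen i), fun i j => ?_⟩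
  apply Submodule.mem_iSup_of_mem 1
  rw [Ideal.mem_colon_span_singleton, pow_one]
  have key : X (Sum.inl v₁) *
      (X (Sum.inr ⟨insert v₂ (σ i), hfac₂ i⟩) * X (Sum.inr ⟨insert v₁ (σ j), hfac₁ j⟩) -
        X (Sum.inr ⟨insert v₂ (σ j), hfac₂ j⟩) * X (Sum.inr ⟨insert v₁ (σ i), hfac₁ i⟩)) ∈
      JofPM k Δ := by
    have h1 := Ideal.mul_mem_left _ (X (Sum.inr ⟨insert v₂ (σ i), hfac₂ i⟩)) (hgen j)
    have h2 := Ideal.mul_mem_left _ (X (Sum.inr ⟨insert v₂ (σ j), hfac₂ j⟩)) (hgen i)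
    have := Ideal.sub_mem _ h1 h2
    convert this using 1
    ring
  have hx : xProd k Δ = (∏ l ∈ Finset.univ.erase v₁, X (Sum.inl l)) * X (Sum.inl v₁) := by
    rw [xProd, ← Finset.mul_prod_erase Finset.univ _ (Finset.mem_univ v₁), mul_comm]
  rw [mul_comm, hx, mul_assoc]
  exact Ideal.mul_mem_left _ _ key
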